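/- Let f be a complementary choice function on a finite set X. Define u(A) to be the number of open sets (sets K with f(K) = K) contained in A. Then u is supermodular, and for every A ⊆ X, f(A) is the inclusion-minimal subset of A with the largest value of u among all subsets of A. -/
import Mathlib


theorem stmt_16 {X : Type*} [Fintype X] (f : Set X → Set X)
    (hchoice : ∀ A : Set X, f A ⊆ A)
    (hmono : ∀ A B : Set X, A ⊆ B → f A ⊆ f B)
    (hcons : ∀ A B : Set X, f A ⊆ B → B ⊆ A → f B = f A)
    (u : Set X → ℝ)
    (hu : ∀ A : Set X, u A = ({K : Set X | f K = K ∧ K ⊆ A}).ncard) :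
    (∀ A B : Set X, u A + u B ≤ u (A ∩ B) + u (A ∪ B)) ∧
    (∀ A : Set X,
      f A ⊆ A ∧ (∀ C ⊆ A, u C ≤ u (f A)) ∧
      (∀ C ⊆ A, (∀ D ⊆ A, u D ≤ u C) → f A ⊆ C)) := by
  haveI : Finite X := inferInstance
  set S : Set X → Set (Set X) := fun A => {K : Set X | f K = K ∧ K ⊆ A} with hS
  have hfin : ∀ A : Set X, (S A).Finite := fun A => Set.toFinite _
  have hSmono : ∀ A B : Set X, A ⊆ B → S A ⊆ S B := by
    intro A B hAB K hK
    exact ⟨hK.1, hK.2.trans hAB⟩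
  -- f A is open
  have hopen : ∀ A : Set X, f (f A) = f A := fun A =>
    hcons A (f A) (subset_refl _) (hchoice A)
  -- open sets contained in A are contained in f A
  have hkey : ∀ A : Set X, S A = S (f A) := by
    intro A
    apply Set.Subset.antisymm
    · rintro K ⟨hK, hKA⟩
      exact ⟨hK, hK ▸ hmono K A hKA⟩
    · exact hSmono _ _ (hchoice A)
  constructor
  · intro A B
    rw [hu A, hu B, hu (A ∩ B), hu (A ∪ B)]
    have h1 : S A ∩ S B = S (A ∩ B) := by
      ext K
      simp only [hS, Set.mem_inter_iff, Set.mem_setOf_eq, Set.subset_inter_iff]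
      tauto
    have h2 : S A ∪ S B ⊆ S (A ∪ B) := by
      rintro K (hK | hK)
      · exact ⟨hK.1, hK.2.trans Set.subset_union_left⟩
      · exact ⟨hK.1, hK.2.trans Set.subset_union_right⟩
    have hcard : (S A).ncard + (S B).ncard ≤ (S (A ∩ B)).ncard + (S (A ∪ B)).ncard := by
      rw [← h1]
      calc (S A).ncard + (S B).ncard
          = (S A ∪ S B).ncard + (S A ∩ S B).ncard :=
            (Set.ncard_union_add_ncard_inter _ _ (hfin A) (hfin B)).symm
        _ ≤ (S (A ∪ B)).ncard + (S A ∩ S B).ncard := by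
            exact Nat.add_le_add_right (Set.ncard_le_ncard h2 (hfin _)) _
        _ = (S A ∩ S B).ncard + (S (A ∪ B)).ncard := by ring
    exact_mod_cast hcard
  · intro A
    refine ⟨hchoice A, ?_, ?_⟩
    · intro C hCA
      rw [hu C, hu (f A)]
      show ((S C).ncard : ℝ) ≤ (S (f A)).ncard
      rw [← hkey A]
      exact_mod_cast Set.ncard_le_ncard (hSmono _ _ hCA) (hfin A)
    · intro C hCA hmax
      have h1 : u (f A) ≤ u C := hmax (f A) (hchoice A)
      have h2 : (S (f A)).ncard ≤ (S C).ncard := by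
        rw [hu (f A), hu C] at h1; exact_mod_cast h1
      have hsub : S C ⊆ S A := hSmono _ _ hCA
      rw [← hkey A] at h2
      have heq : S C = S A := Set.eq_of_subset_of_ncard_le hsub h2 (hfin A)
      have : f A ∈ S A := ⟨hopen A, hchoice A⟩
      rw [← heq] at this
      exact this.2
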